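/- Let K be a field, V a K-vector space, ∇ : V → V a K-linear map, T_1,…,T_m pairwise distinct nonzero elements of K, and H_1,…,H_m ∈ V with ∇H_i = T_i·H_i for each i. Set Φ_μ := Σ_{j=1}^{m} (∏_{s≠j}(1 − T_j/T_s))^{-1}·H_j. Then for every subset S = {i_1 < i_2 < ⋯ < i_k} of {1,…,m} with k ≥ 1: ∏_{i ∉ S} (id − T_i^{-1}∇) applied to Φ_μ equals the divided difference Δ[1/T_{i_1},…,1/T_{i_k}; H_{i_1},…,H_{i_k}]. -/

import Mathlib

/-- The distinguished element `Φ_μ = ∑_j (∏_{s≠j} (1 - T_j/T_s))⁻¹ • H_j`. -/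
noncomputable def Phimu {K : Type*} [Field K] {V : Type*} [AddCommGroup V] [Module K V]
    (m : ℕ) (T : Fin m → K) (H : Fin m → V) : V :=
  ∑ j, (∏ s ∈ Finset.univ.erase j, (1 - T j / T s))⁻¹ • H j

/-- The vector-valued divided difference
`Δ[y_1,…,y_k; A_1,…,A_k]`, defined recursively by `Δ[y; A] = A` and
`Δ[y_1,…,y_k; A_1,…,A_k] = (y_1 Δ[y_1,…,y_{k-1}; A_1,…,A_{k-1}]
  - y_k Δ[y_2,…,y_k; A_2,…,A_k]) / (y_1 - y_k)`,
here taking a single list of pairs `(y_i, A_i)`. -/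
noncomputable def divDiff {K : Type*} [Field K] {V : Type*} [AddCommGroup V] [Module K V] :
    List (K × V) → V
  | [] => 0
  | [p] => p.2
  | p :: q :: rest =>
      (p.1 - ((q :: rest).getLast (List.cons_ne_nil q rest)).1)⁻¹ •
        (p.1 • divDiff ((p :: q :: rest).dropLast) -
          ((q :: rest).getLast (List.cons_ne_nil q rest)).1 • divDiff (q :: rest))
  termination_by l => l.length
  decreasing_by
  · simp [List.length_dropLast]
  · simp

section AuxLemmas

variable {K : Type*} [Field K] {V : Type*} [AddCommGroup V] [Module K V]

private lemma BG_r2 {a b : K} (ha : a ≠ 0) (hb : b ≠ 0) : a⁻¹ - b⁻¹ = (b - a)/(a*b) := by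
  field_simp

private lemma BG_r1 {a t : K} (ha : a ≠ 0) : (1:K) - t/a = (a - t)/a := by
  field_simp

private lemma BG_sc1 (a b : K) (ha : a ≠ 0) (hb : b ≠ 0) (hne : a ≠ b) :
    (a⁻¹ - b⁻¹)⁻¹ * a⁻¹ = (1 - a/b)⁻¹ := by
  have hba : b - a ≠ 0 := sub_ne_zero.2 (Ne.symm hne)
  rw [BG_r2 ha hb, BG_r1 hb, inv_div, inv_div]
  field_simp

private lemma BG_sc2 (a b : K) (ha : a ≠ 0) (hb : b ≠ 0) (hne : a ≠ b) :
    -((a⁻¹ - b⁻¹)⁻¹ * b⁻¹) = (1 - b/a)⁻¹ := by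
  have hba : b - a ≠ 0 := sub_ne_zero.2 (Ne.symm hne)
  have hab : a - b ≠ 0 := sub_ne_zero.2 hne
  rw [BG_r2 ha hb, BG_r1 ha, inv_div, inv_div]
  field_simp
  ring

private lemma BG_sc3 (a b t : K) (ha : a ≠ 0) (hb : b ≠ 0)
    (hta : t ≠ a) (htb : t ≠ b) (hne : a ≠ b) :
    (a⁻¹ - b⁻¹)⁻¹ * (a⁻¹ * (1 - t/a)⁻¹ - b⁻¹ * (1 - t/b)⁻¹) = (1 - t/a)⁻¹ * (1 - t/b)⁻¹ := by
  have hba : b - a ≠ 0 := sub_ne_zero.2 (Ne.symm hne)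
  have hat : a - t ≠ 0 := sub_ne_zero.2 (Ne.symm hta)
  have hbt : b - t ≠ 0 := sub_ne_zero.2 (Ne.symm htb)
  rw [BG_r2 ha hb, BG_r1 ha, BG_r1 hb, inv_div, inv_div, inv_div]
  field_simp
  ring

/-- One step of the divided-difference recursion, expressed as a finset identity. -/
private lemma BG_alg_step {m : ℕ} (T : Fin m → K) (hT0 : ∀ i, T i ≠ 0)
    (hTinj : Function.Injective T) (H : Fin m → V)
    (A : Finset (Fin m)) (a b : Fin m) (ha : a ∈ A) (hb : b ∈ A) (hab : a ≠ b) :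
    ((T a)⁻¹ - (T b)⁻¹)⁻¹ •
      ((T a)⁻¹ • ∑ j ∈ A.erase b, (∏ s ∈ (A.erase b).erase j, (1 - T j / T s))⁻¹ • H j -
       (T b)⁻¹ • ∑ j ∈ A.erase a, (∏ s ∈ (A.erase a).erase j, (1 - T j / T s))⁻¹ • H j) =
    ∑ j ∈ A, (∏ s ∈ A.erase j, (1 - T j / T s))⁻¹ • H j := by
  have hTab : T a ≠ T b := fun h => hab (hTinj h)
  have e1 : ∑ j ∈ A.erase b, (∏ s ∈ (A.erase b).erase j, (1 - T j / T s))⁻¹ • H j =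
      ∑ j ∈ A, (if j = b then (0:K) else (∏ s ∈ (A.erase b).erase j, (1 - T j / T s))⁻¹) • H j := by
    rw [← Finset.sum_erase A (a := b)
      (f := fun j => (if j = b then (0:K) else (∏ s ∈ (A.erase b).erase j, (1 - T j / T s))⁻¹) • H j)
      (by simp)]
    exact Finset.sum_congr rfl fun j hj => by rw [if_neg (Finset.ne_of_mem_erase hj)]
  have e2 : ∑ j ∈ A.erase a, (∏ s ∈ (A.erase a).erase j, (1 - T j / T s))⁻¹ • H j =
      ∑ j ∈ A, (if j = a then (0:K) else (∏ s ∈ (A.erase a).erase j, (1 - T j / T s))⁻¹) • H j := by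
    rw [← Finset.sum_erase A (a := a)
      (f := fun j => (if j = a then (0:K) else (∏ s ∈ (A.erase a).erase j, (1 - T j / T s))⁻¹) • H j)
      (by simp)]
    exact Finset.sum_congr rfl fun j hj => by rw [if_neg (Finset.ne_of_mem_erase hj)]
  rw [e1, e2, Finset.smul_sum, Finset.smul_sum, ← Finset.sum_sub_distrib, Finset.smul_sum]
  refine Finset.sum_congr rfl fun j hj => ?_
  rw [smul_smul, smul_smul, ← sub_smul, smul_smul]
  congr 1
  by_cases hja : j = a
  · subst hja
    rw [if_neg hab, if_pos rfl, mul_zero, sub_zero]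
    have hbmem : b ∈ A.erase j := Finset.mem_erase.2 ⟨Ne.symm hab, hb⟩
    have hins : A.erase j = insert b ((A.erase b).erase j) := by
      rw [Finset.erase_right_comm (s := A) (a := b) (b := j), Finset.insert_erase hbmem]
    rw [hins, Finset.prod_insert
      (fun h => (Finset.notMem_erase b A) (Finset.mem_of_mem_erase h)), mul_inv]
    linear_combination (∏ s ∈ (A.erase b).erase j, (1 - T j / T s))⁻¹ *
      BG_sc1 (T j) (T b) (hT0 j) (hT0 b) hTab
  · by_cases hjb : j = b
    · subst hjb
      rw [if_pos rfl, if_neg hja]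
      have hamem : a ∈ A.erase j := Finset.mem_erase.2 ⟨fun h => hja h.symm, ha⟩
      have hins : A.erase j = insert a ((A.erase a).erase j) := by
        rw [Finset.erase_right_comm (s := A) (a := a) (b := j), Finset.insert_erase hamem]
      rw [hins, Finset.prod_insert
        (fun h => (Finset.notMem_erase a A) (Finset.mem_of_mem_erase h)), mul_inv]
      linear_combination (∏ s ∈ (A.erase a).erase j, (1 - T j / T s))⁻¹ *
        BG_sc2 (T a) (T j) (hT0 a) (hT0 j) hTab
    · rw [if_neg hjb, if_neg hja]
      have hTja : T j ≠ T a := fun h => hja (hTinj h)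
      have hTjb : T j ≠ T b := fun h => hjb (hTinj h)
      have hanotR : a ∉ ((A.erase a).erase b).erase j := fun h =>
        (Finset.notMem_erase a A) (Finset.mem_of_mem_erase (Finset.mem_of_mem_erase h))
      have hbnotR : b ∉ ((A.erase a).erase b).erase j := fun h =>
        (Finset.notMem_erase b (A.erase a)) (Finset.mem_of_mem_erase h)
      have h1 : (A.erase b).erase j = insert a (((A.erase a).erase b).erase j) := by
        have hamem : a ∈ (A.erase b).erase j :=
          Finset.mem_erase.2 ⟨fun h => hja h.symm, Finset.mem_erase.2 ⟨hab, ha⟩⟩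
        rw [← Finset.insert_erase hamem]
        congr 1
        rw [Finset.erase_right_comm (s := A.erase b), Finset.erase_right_comm (s := A)]
      have h2 : (A.erase a).erase j = insert b (((A.erase a).erase b).erase j) := by
        have hbmem : b ∈ (A.erase a).erase j :=
          Finset.mem_erase.2 ⟨fun h => hjb h.symm, Finset.mem_erase.2 ⟨Ne.symm hab, hb⟩⟩
        rw [← Finset.insert_erase hbmem]
        congr 1
        rw [Finset.erase_right_comm (s := A.erase a)]
      have h3 : A.erase j = insert a (insert b (((A.erase a).erase b).erase j)) := by
        have hamem : a ∈ A.erase j := Finset.mem_erase.2 ⟨fun h => hja h.symm, ha⟩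
        rw [← Finset.insert_erase hamem]
        congr 1
        rw [Finset.erase_right_comm (s := A), h2]
      have hanotins : a ∉ insert b (((A.erase a).erase b).erase j) := by
        intro h
        rcases Finset.mem_insert.1 h with h | h
        · exact hab h
        · exact hanotR h
      rw [h1, h2, h3, Finset.prod_insert hanotR, Finset.prod_insert hbnotR,
        Finset.prod_insert hanotins, Finset.prod_insert hbnotR, mul_inv, mul_inv, mul_inv,
        mul_inv]
      linear_combination (∏ s ∈ ((A.erase a).erase b).erase j, (1 - T j / T s))⁻¹ *
        BG_sc3 (T a) (T b) (T j) (hT0 a) (hT0 b) hTja hTjb hTab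

private lemma BG_dropLast_toFinset {α : Type*} [DecidableEq α] (l : List α) (h : l ≠ [])
    (hnd : l.Nodup) :
    l.dropLast.toFinset = l.toFinset.erase (l.getLast h) := by
  have h2 := hnd
  rw [← List.dropLast_append_getLast h, List.nodup_append] at h2
  have hb : l.getLast h ∉ l.dropLast := fun hmem =>
    h2.2.2 _ hmem _ (List.mem_singleton_self _) rfl
  have hsplit : ∀ x, x ∈ l ↔ x ∈ l.dropLast ∨ x = l.getLast h := by
    intro x
    conv_lhs => rw [← List.dropLast_append_getLast h]
    simp [List.mem_append]
  ext x
  simp only [List.mem_toFinset, Finset.mem_erase]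
  constructor
  · intro hx
    exact ⟨fun hxb => hb (hxb ▸ hx), (hsplit x).2 (Or.inl hx)⟩
  · rintro ⟨hxb, hx⟩
    rcases (hsplit x).1 hx with h' | h'
    · exact h'
    · exact absurd h' hxb

/-- Closed form for the divided difference of eigen-data along a nodup list of indices. -/
private lemma BG_divDiff_key {m : ℕ} (T : Fin m → K) (hT0 : ∀ i, T i ≠ 0)
    (hTinj : Function.Injective T) (H : Fin m → V) :
    ∀ (n : ℕ) (l : List (Fin m)), l.length = n → l ≠ [] → l.Nodup →
      divDiff (l.map fun i => ((T i)⁻¹, H i)) =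
        ∑ j ∈ l.toFinset, (∏ s ∈ l.toFinset.erase j, (1 - T j / T s))⁻¹ • H j := by
  intro n
  induction n using Nat.strong_induction_on with
  | _ n ih =>
    intro l hlen hne hnd
    match l with
    | [a] => simp [divDiff]
    | a :: q :: rest =>
      have htne : (q :: rest) ≠ [] := List.cons_ne_nil q rest
      set b := (q :: rest).getLast htne with hbdef
      have hlne : (a :: q :: rest) ≠ [] := List.cons_ne_nil _ _
      have hgl : (a :: q :: rest).getLast hlne = b := List.getLast_cons htne
      have hanot : a ∉ (q :: rest) := (List.nodup_cons.1 hnd).1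
      have hmap : ((a :: q :: rest).map fun i => ((T i)⁻¹, H i)) =
          ((T a)⁻¹, H a) :: ((T q)⁻¹, H q) :: (rest.map fun i => ((T i)⁻¹, H i)) := by
        simp
      rw [hmap, divDiff]
      have e_last : ((((T q)⁻¹, H q)) :: (rest.map fun i => ((T i)⁻¹, H i))).getLast
          (List.cons_ne_nil _ _) = ((T b)⁻¹, H b) :=
        List.getLast_map (f := fun i => ((T i)⁻¹, H i)) (l := q :: rest) (by simp)
      have e_drop : ((((T a)⁻¹, H a)) :: (((T q)⁻¹, H q)) ::
            (rest.map fun i => ((T i)⁻¹, H i))).dropLast =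
          ((a :: q :: rest).dropLast).map (fun i => ((T i)⁻¹, H i)) :=
        (List.map_dropLast (f := fun i => ((T i)⁻¹, H i)) (l := a :: q :: rest)).symm
      rw [e_last, e_drop]
      have hlen' : (a :: q :: rest).length = n := hlen
      simp only [List.length_cons] at hlen'
      have ihtail := ih (q :: rest).length (by simp; omega) (q :: rest) rfl htne
        (List.nodup_cons.1 hnd).2
      have ihdrop := ih ((a :: q :: rest).dropLast).length
        (by simp [List.length_dropLast]; omega) ((a :: q :: rest).dropLast) rfl
        (by rw [show (a :: q :: rest).dropLast = a :: (q :: rest).dropLast from rfl]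
            exact List.cons_ne_nil _ _)
        ((List.dropLast_sublist _).nodup hnd)
      rw [show divDiff (((T q)⁻¹, H q) :: (rest.map fun i => ((T i)⁻¹, H i))) =
          divDiff ((q :: rest).map fun i => ((T i)⁻¹, H i)) from rfl, ihtail, ihdrop]
      have hdt : (a :: q :: rest).dropLast.toFinset = (a :: q :: rest).toFinset.erase b := by
        rw [BG_dropLast_toFinset _ hlne hnd, hgl]
      have htt : (q :: rest).toFinset = (a :: q :: rest).toFinset.erase a := by
        rw [show (a :: q :: rest).toFinset = insert a (q :: rest).toFinset from
          List.toFinset_cons, Finset.erase_insert (by simpa using hanot)]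
      rw [hdt, htt]
      exact BG_alg_step T hT0 hTinj H _ a b (by simp)
        (List.mem_toFinset.2 (List.mem_cons_of_mem a (List.getLast_mem htne)))
        (fun h => hanot (h ▸ List.getLast_mem htne))

private lemma BG_aeval_prod_eig {m : ℕ} (T : Fin m → K) (nabla : Module.End K V)
    (H : Fin m → V) (heig : ∀ i, nabla (H i) = T i • H i) (s : Finset (Fin m)) (j : Fin m) :
    (Polynomial.aeval nabla (∏ i ∈ s, (1 - Polynomial.C (T i)⁻¹ * Polynomial.X))) (H j) =
      (∏ i ∈ s, (1 - T j / T i)) • H j := by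
  induction s using Finset.induction_on with
  | empty => simp
  | insert i s hx ih =>
    rw [Finset.prod_insert hx, Finset.prod_insert hx, map_mul, Module.End.mul_apply, ih,
      map_smul, map_sub, map_one, map_mul, Polynomial.aeval_X, Polynomial.aeval_C]
    rw [LinearMap.sub_apply, Module.End.one_apply, Module.End.mul_apply,
      Module.algebraMap_end_apply, heig, smul_smul, mul_smul]
    rw [smul_sub, smul_smul, smul_smul, ← sub_smul]
    congr 1
    rw [div_eq_mul_inv]
    ring

end AuxLemmas

/-- Proposition 3.4 of Bergeron–Garsia: for `S = {i_1 < ⋯ < i_k} ⊆ {1,…,m}`,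
`∏_{i ∉ S} (1 - ∇/T_i)` applied to `Φ_μ` equals the divided difference
`Δ[1/T_{i_1},…,1/T_{i_k}; H_{i_1},…,H_{i_k}]`. -/
theorem statement12 {K : Type*} [Field K] {V : Type*} [AddCommGroup V] [Module K V]
    (m : ℕ) (T : Fin m → K) (hT0 : ∀ i, T i ≠ 0) (hTinj : Function.Injective T)
    (nabla : Module.End K V) (H : Fin m → V)
    (heig : ∀ i, nabla (H i) = T i • H i)
    (S : Finset (Fin m)) (hS : S.Nonempty) :
    Polynomial.aeval nabla
        (∏ i ∈ Sᶜ, (1 - Polynomial.C (T i)⁻¹ * Polynomial.X))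
        (Phimu m T H) =
      divDiff ((S.sort (· ≤ ·)).map fun i => ((T i)⁻¹, H i)) := by
  -- RHS via the key lemma
  have hsortne : S.sort (· ≤ ·) ≠ [] := by
    intro h
    have := Finset.sort_toFinset S (· ≤ ·)
    rw [h] at this
    simp at this
    exact hS.ne_empty this.symm
  have hRHS := BG_divDiff_key T hT0 hTinj H (S.sort (· ≤ ·)).length (S.sort (· ≤ ·)) rfl
    hsortne (Finset.sort_nodup _ _)
  rw [Finset.sort_toFinset] at hRHS
  rw [hRHS]
  -- LHS
  unfold Phimu
  rw [map_sum]
  have hterm : ∀ j : Fin m,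
      (Polynomial.aeval nabla (∏ i ∈ Sᶜ, (1 - Polynomial.C (T i)⁻¹ * Polynomial.X)))
        ((∏ s ∈ Finset.univ.erase j, (1 - T j / T s))⁻¹ • H j) =
      ((∏ s ∈ Finset.univ.erase j, (1 - T j / T s))⁻¹ * ∏ i ∈ Sᶜ, (1 - T j / T i)) • H j := by
    intro j
    rw [map_smul, BG_aeval_prod_eig T nabla H heig, smul_smul]
  simp only [hterm]
  rw [← Finset.sum_subset (Finset.subset_univ S) ?hvanish]
  case hvanish =>
    intro j _ hjS
    have : ∏ i ∈ Sᶜ, (1 - T j / T i) = 0 :=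
      Finset.prod_eq_zero (Finset.mem_compl.2 hjS) (by rw [div_self (hT0 j), sub_self])
    rw [this, mul_zero, zero_smul]
  refine Finset.sum_congr rfl fun j hj => ?_
  congr 1
  have hsplit : Finset.univ.erase j = (S.erase j) ∪ Sᶜ := by
    ext x
    simp only [Finset.mem_erase, Finset.mem_union, Finset.mem_compl, Finset.mem_univ,
      and_true]
    constructor
    · intro hx
      by_cases hxS : x ∈ S
      · exact Or.inl ⟨hx, hxS⟩
      · exact Or.inr hxS
    · rintro (⟨hx, _⟩ | hx)
      · exact hx
      · exact fun h => hx (h ▸ hj)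
  have hdisj : Disjoint (S.erase j) Sᶜ :=
    Disjoint.mono_left (Finset.erase_subset _ _) disjoint_compl_right
  have hQne : ∏ i ∈ Sᶜ, (1 - T j / T i) ≠ 0 := by
    rw [Finset.prod_ne_zero_iff]
    intro i hi
    rw [sub_ne_zero]
    intro h
    have hTji : T j = T i := (div_eq_one_iff_eq (hT0 i)).1 h.symm
    exact (Finset.mem_compl.1 hi) (hTinj hTji ▸ hj)
  rw [hsplit, Finset.prod_union hdisj, mul_inv, mul_assoc,
    inv_mul_cancel₀ hQne, mul_one]
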